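/- For real parameters γ, δ, ψ, ρ, a and β ∈ ℝ, define the 3×3 real matrix A(β) with rows (δβ², δ(1-β²), ψρ), (γδβ², 1-γ(1-δ(1-β²)), γψρ), and (0, 0, ρ), and let c := (ψa, γψa, a) ∈ ℝ³. If γ ≠ 0, δ ≠ 1, and ρ ≠ 1, then the vector z* := (h, h, a/(1-ρ)) with h := ψa/((1-δ)(1-ρ)) satisfies z* = c + A(β)z*, and z* is the unique solution in ℝ³ of the equation z = c + A(β)z. -/

import Mathlib

open Matrix

/-- Companion matrix `A(β)` of the time-varying VAR(1) representation. -/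
noncomputable def Amat (γ δ ψ ρ β : ℝ) : Matrix (Fin 3) (Fin 3) ℝ :=
  !![δ * β ^ 2, δ * (1 - β ^ 2), ψ * ρ;
     γ * δ * β ^ 2, 1 - γ * (1 - δ * (1 - β ^ 2)), γ * ψ * ρ;
     0, 0, ρ]

/-- With intercept vector `c = (ψa, γψa, a)` and `γ ≠ 0`, `δ ≠ 1`, `ρ ≠ 1`, the vector
`z* = (h, h, a/(1-ρ))` with `h = ψa/((1-δ)(1-ρ))` is the unique solution of
`z = c + A(β) z`. -/
theorem fixed_point_of_affine_map (γ δ ψ ρ a β : ℝ)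
    (hγ : γ ≠ 0) (hδ : δ ≠ 1) (hρ : ρ ≠ 1) :
    let c : Fin 3 → ℝ := ![ψ * a, γ * ψ * a, a]
    let h : ℝ := ψ * a / ((1 - δ) * (1 - ρ))
    let zstar : Fin 3 → ℝ := ![h, h, a / (1 - ρ)]
    zstar = c + (Amat γ δ ψ ρ β).mulVec zstar ∧
      ∀ z : Fin 3 → ℝ, z = c + (Amat γ δ ψ ρ β).mulVec z → z = zstar := by
  intro c h zstar
  have hδ' : (1 : ℝ) - δ ≠ 0 := sub_ne_zero.mpr (Ne.symm hδ)
  have hρ' : (1 : ℝ) - ρ ≠ 0 := sub_ne_zero.mpr (Ne.symm hρ)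
  constructor
  · funext i
    fin_cases i <;>
      simp [c, h, zstar, Amat, mulVec, dotProduct, Fin.sum_univ_three] <;>
      field_simp <;> ring
  · intro z hz
    have h0 := congrFun hz 0
    have h1 := congrFun hz 1
    have h2 := congrFun hz 2
    simp [Amat, mulVec, dotProduct, Fin.sum_univ_three, c] at h0 h1 h2
    -- z 2 = a/(1-ρ)
    have hz2 : z 2 = a / (1 - ρ) := by
      field_simp
      linarith
    -- from h1: 0 = γ * (ψa + δβ² z0 + δ(1-β²) z1 + ψρ z2 - z1)
    have key : ψ * a + δ * β ^ 2 * z 0 + δ * (1 - β ^ 2) * z 1 + ψ * ρ * z 2 - z 1 = 0 := by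
      have h1' : γ * (ψ * a + δ * β ^ 2 * z 0 + δ * (1 - β ^ 2) * z 1 + ψ * ρ * z 2 - z 1) = 0 := by
        nlinarith [h1]
      exact (mul_eq_zero.mp h1').resolve_left hγ
    have hz01 : z 0 = z 1 := by linarith
    have hz0 : z 0 = h := by
      rw [hz2] at h0
      rw [← hz01] at h0
      have : (1 - δ) * (1 - ρ) ≠ 0 := mul_ne_zero hδ' hρ'
      show z 0 = ψ * a / ((1 - δ) * (1 - ρ))
      rw [eq_div_iff this]
      field_simp at h0
      nlinarith [h0]
    funext i
    fin_cases i <;> simp [zstar]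
    · exact hz0
    · rw [← hz01]; exact hz0
    · exact hz2
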